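/- (Proposition 3.1, invariant part, single layer.) Let V = Fin n be a node set, H, E, H' types, M an additive commutative monoid, h : V → H node features, e : V → V → E edge features, N : V → Finset V neighborhoods, and φ_m : H → H → ℝ → E → M, φ_h : H → M → H' arbitrary functions. For coordinates y : V → (Fin 3 → ℝ) define the invariant layer output f(y) : V → H' by f(y) i = φ_h (h i) (∑ j ∈ N i, φ_m (h i) (h j) (‖y i − y j‖²) (e i j)). Let μ, μ_g, t ∈ ℝ³, Q ∈ O(3) orthogonal with μ_g = Q.mulVec μ + t, and L, L_g invertible 3×3 real matrices with L_g * L_gᵀ = Q * L * Lᵀ * Qᵀ; set F(v) = L⁻¹.mulVec (v − μ) and F_g(v) = L_g⁻¹.mulVec (v − μ_g). Then for any coordinates x : V → (Fin 3 → ℝ), f(fun i => F (x i)) = f(fun i => F_g (Q.mulVec (x i) + t)); i.e., the invariant output of a scalarization-based E(3)-equivariant GNN layer computed in the standard space is invariant under rigid motions of the input followed by the corresponding re-derived affine transformation. -/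

import Mathlib

open Matrix

/-- View a vector `Fin 3 → ℝ` as a point of Euclidean space (ℓ² norm). -/
noncomputable def toE (v : Fin 3 → ℝ) : EuclideanSpace ℝ (Fin 3) :=
  (WithLp.equiv 2 (Fin 3 → ℝ)).symm v

lemma norm_toE_sq (v : Fin 3 → ℝ) : ‖toE v‖ ^ 2 = v ⬝ᵥ v := by
  rw [← real_inner_self_eq_norm_sq]
  simp [toE, PiLp.inner_apply, dotProduct, mul_comm]
  rw [EuclideanSpace.norm_sq_eq]; simp [sq]

lemma toE_sub (v w : Fin 3 → ℝ) : toE v - toE w = toE (v - w) := rfl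

lemma mulVec_dot_self (A : Matrix (Fin 3) (Fin 3) ℝ) (d : Fin 3 → ℝ) :
    A.mulVec d ⬝ᵥ A.mulVec d = d ⬝ᵥ (Aᵀ * A).mulVec d := by
  rw [Matrix.dotProduct_mulVec, Matrix.dotProduct_mulVec, ← Matrix.vecMul_vecMul,
    Matrix.vecMul_transpose]

/-- Proposition 3.1, invariant part (single layer): the invariant output of a
scalarization-based E(3)-equivariant GNN layer, computed on coordinates mapped to
the standard space, is invariant under rigid motions of the input together with
the correspondingly re-derived affine transformation. -/
theorem gnn_invariant_output_invariant
    (n : ℕ) (H E H' M : Type*) [AddCommMonoid M]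
    (h : Fin n → H) (e : Fin n → Fin n → E) (N : Fin n → Finset (Fin n))
    (φm : H → H → ℝ → E → M) (φh : H → M → H')
    (μ μg t : Fin 3 → ℝ) (Q L Lg : Matrix (Fin 3) (Fin 3) ℝ)
    (hQ : Q ∈ Matrix.orthogonalGroup (Fin 3) ℝ)
    (hμ : μg = Q.mulVec μ + t)
    (hL : IsUnit L.det) (hLg : IsUnit Lg.det)
    (hcov : Lg * Lgᵀ = Q * L * Lᵀ * Qᵀ)
    (f : (Fin n → (Fin 3 → ℝ)) → Fin n → H')
    (hf : ∀ (y : Fin n → (Fin 3 → ℝ)) (i : Fin n),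
      f y i = φh (h i) (∑ j ∈ N i, φm (h i) (h j) (‖toE (y i) - toE (y j)‖ ^ 2) (e i j)))
    (x : Fin n → (Fin 3 → ℝ)) :
    f (fun i => L⁻¹.mulVec (x i - μ))
      = f (fun i => Lg⁻¹.mulVec (Q.mulVec (x i) + t - μg)) := by
  -- orthogonality facts
  rw [Matrix.mem_orthogonalGroup_iff'] at hQ
  have hQtQ : Qᵀ * Q = 1 := hQ
  have hQQt : Q * Qᵀ = 1 := by
    rw [mul_eq_one_comm] at hQtQ; exact hQtQ
  have hQinv : Q⁻¹ = Qᵀ := Matrix.inv_eq_right_inv hQQt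
  have hQtinv : (Qᵀ)⁻¹ = Q := Matrix.inv_eq_right_inv hQtQ
  have cancel1 : ∀ X : Matrix (Fin 3) (Fin 3) ℝ, Qᵀ * (Q * X) = X := fun X => by
    rw [← Matrix.mul_assoc, hQtQ, Matrix.one_mul]
  -- key matrix identity
  have hkey : Qᵀ * ((Lg⁻¹)ᵀ * Lg⁻¹) * Q = (L⁻¹)ᵀ * L⁻¹ := by
    have h1 : (Lg⁻¹)ᵀ * Lg⁻¹ = (Lg * Lgᵀ)⁻¹ := by
      rw [Matrix.mul_inv_rev, Matrix.transpose_nonsing_inv]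
    have h2 : (L⁻¹)ᵀ * L⁻¹ = (L * Lᵀ)⁻¹ := by
      rw [Matrix.mul_inv_rev, Matrix.transpose_nonsing_inv]
    rw [h1, h2, hcov, Matrix.mul_inv_rev, Matrix.mul_inv_rev, Matrix.mul_inv_rev,
      Matrix.mul_inv_rev, hQinv, hQtinv]
    simp only [Matrix.mul_assoc, hQtQ, Matrix.mul_one]
    rw [cancel1]
  -- pointwise squared-norm equality
  have hdist : ∀ d : Fin 3 → ℝ,
      ‖toE (L⁻¹.mulVec d)‖ ^ 2 = ‖toE (Lg⁻¹.mulVec (Q.mulVec d))‖ ^ 2 := by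
    intro d
    rw [norm_toE_sq, norm_toE_sq, Matrix.mulVec_mulVec, mulVec_dot_self, mulVec_dot_self]
    congr 2
    rw [Matrix.transpose_mul, ← hkey]
    simp only [Matrix.mul_assoc]
  funext i
  rw [hf, hf]
  congr 1
  apply Finset.sum_congr rfl
  intro j _
  congr 1
  have harg : ∀ k, Q.mulVec (x k) + t - μg = Q.mulVec (x k - μ) := by
    intro k; rw [hμ, Matrix.mulVec_sub]; abel
  rw [harg, harg, toE_sub, toE_sub, ← Matrix.mulVec_sub, ← Matrix.mulVec_sub,
    ← Matrix.mulVec_sub Q, hdist]
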